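/- Homological equation for periodic frequencies: if ω is T-periodic, l(I) = ω·I, f ∈ C^k, [f] its T-average, and χ = (1/T)∫_0^T t (f − [f]) ∘ Φ_t^l dt, then {χ, l} = f − [f]. In particular no small divisors occur. -/

import Mathlib

open Metric Set MeasureTheory intervalIntegral

def ThetaPeriodic {n : ℕ} {F : Type*} (f : ((Fin n → ℝ) × (Fin n → ℝ)) → F) : Prop :=
  ∀ x : (Fin n → ℝ) × (Fin n → ℝ), ∀ m : Fin n → ℤ,
    f (x.1 + (fun i => (m i : ℝ)), x.2) = f x

def Dom (n : ℕ) (ρ : ℝ) : Set ((Fin n → ℝ) × (Fin n → ℝ)) :=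
  univ ×ˢ ball (0 : Fin n → ℝ) ρ

def IsPeriodicVec {n : ℕ} (ω : Fin n → ℝ) (T : ℝ) : Prop :=
  0 < T ∧ ω ≠ 0 ∧ (∀ i, ∃ z : ℤ, T * ω i = (z : ℝ)) ∧
    ∀ t : ℝ, 0 < t → (∀ i, ∃ z : ℤ, t * ω i = (z : ℝ)) → T ≤ t

noncomputable def timeAverage {n : ℕ} (ω : Fin n → ℝ) (T : ℝ)
    (f : ((Fin n → ℝ) × (Fin n → ℝ)) → ℝ) : ((Fin n → ℝ) × (Fin n → ℝ)) → ℝ :=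
  fun x => (1 / T) * ∫ t in (0 : ℝ)..T, f (x.1 + t • ω, x.2)

noncomputable def averagingGenerator {n : ℕ} (ω : Fin n → ℝ) (T : ℝ)
    (f : ((Fin n → ℝ) × (Fin n → ℝ)) → ℝ) : ((Fin n → ℝ) × (Fin n → ℝ)) → ℝ :=
  fun x => (1 / T) * ∫ t in (0 : ℝ)..T,
    t * (f (x.1 + t • ω, x.2) - timeAverage ω T f (x.1 + t • ω, x.2))

/-- homological equation for periodic frequencies: if `ω` is `T`-periodic,
`f ∈ C^k` (`k ≥ 1`) on `T^n × B_ρ`, `[f]` its `T`-average and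
`χ = (1/T)∫_0^T t (f − [f]) ∘ Φ_t^l dt`, then `{χ, l} = ∂_θ χ · ω = f − [f]`,
where `{χ, l}` is computed as `d/ds (χ ∘ Φ_s^l)|_{s=0}`. No small divisors occur. -/
theorem homological_equation (n k : ℕ) (hk : 1 ≤ k) (ρ : ℝ) (hρ : 0 < ρ)
    (ω : Fin n → ℝ) (T : ℝ) (hω : IsPeriodicVec ω T)
    (f : ((Fin n → ℝ) × (Fin n → ℝ)) → ℝ)
    (hper : ThetaPeriodic f) (hf : ContDiffOn ℝ k f (Dom n ρ)) :
    ∀ x ∈ Dom n ρ,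
      HasDerivAt (fun s : ℝ => averagingGenerator ω T f (x.1 + s • ω, x.2))
        (f x - timeAverage ω T f x) 0 := by
  intro x hx
  obtain ⟨hT, -, hZ, -⟩ := hω
  have hT0 : T ≠ 0 := ne_of_gt hT
  choose m hm using hZ
  set c := timeAverage ω T f x with hc
  set g : ℝ → ℝ := fun u => f (x.1 + u • ω, x.2) with hg
  have hxmem : ∀ u : ℝ, (x.1 + u • ω, x.2) ∈ Dom n ρ := fun u => ⟨mem_univ _, hx.2⟩
  have hcont : Continuous g := by
    apply (hf.continuousOn).comp_continuous
    · exact (continuous_const.add (continuous_id.smul continuous_const)).prodMk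
        continuous_const
    · exact hxmem
  have hTω : (fun i => ((m i : ℝ))) = T • ω := by
    funext i
    simp [Pi.smul_apply, smul_eq_mul, ← hm i]
  have hperg : Function.Periodic g T := by
    intro u
    have h1 := hper (x.1 + u • ω, x.2) m
    simp only [hg]
    rw [← h1]
    congr 2
    rw [hTω, add_smul, ← add_assoc]
  have key : ∀ s t : ℝ, ((x.1 + s • ω) + t • ω, x.2) = (x.1 + (t + s) • ω, x.2) := by
    intro s t
    rw [add_smul]
    congr 1
    abel
  have havg : ∀ s : ℝ, timeAverage ω T f (x.1 + s • ω, x.2) = c := by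
    intro s
    rw [hc]
    simp only [timeAverage]
    congr 1
    calc (∫ t in (0:ℝ)..T, f ((x.1 + s • ω) + t • ω, x.2))
        = ∫ t in (0:ℝ)..T, g (t + s) := by
          apply intervalIntegral.integral_congr
          intro t _
          simp only [hg, key s t]
      _ = ∫ u in (0:ℝ)+s..T+s, g u := intervalIntegral.integral_comp_add_right g s
      _ = ∫ u in (0:ℝ)..T, g u := by
          rw [zero_add, add_comm T s]
          simpa using hperg.intervalIntegral_add_eq s 0
  have hintg : ∫ u in (0:ℝ)..T, g u = T * c := by
    rw [hc]
    simp only [timeAverage]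
    field_simp
    rfl
  have hpergc : Function.Periodic (fun u => g u - c) T := by
    intro u; simp [hperg u]
  have hint0 : ∫ u in (0:ℝ)..T, (g u - c) = 0 := by
    rw [intervalIntegral.integral_sub (hcont.intervalIntegrable _ _)
      (intervalIntegrable_const), hintg, intervalIntegral.integral_const]
    simp [smul_eq_mul]
  set φ : ℝ → ℝ := fun u => u * (g u - c) with hφ
  have hφc : Continuous φ := continuous_id.mul (hcont.sub continuous_const)
  set A : ℝ → ℝ := fun s => ∫ u in (0:ℝ)..s, φ u with hA
  have hAderiv : ∀ s : ℝ, HasDerivAt A (φ s) s := by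
    intro s
    exact intervalIntegral.integral_hasDerivAt_right (hφc.intervalIntegrable _ _)
      hφc.aestronglyMeasurable.stronglyMeasurableAtFilter hφc.continuousAt
  have hfun : ∀ s : ℝ, averagingGenerator ω T f (x.1 + s • ω, x.2)
      = (1/T) * (A (T + s) - A s) := by
    intro s
    simp only [averagingGenerator]
    congr 1
    calc (∫ t in (0:ℝ)..T, t * (f ((x.1 + s • ω) + t • ω, x.2)
            - timeAverage ω T f ((x.1 + s • ω) + t • ω, x.2)))
        = ∫ t in (0:ℝ)..T, (φ (t + s) - s * (g (t + s) - c)) := by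
          apply intervalIntegral.integral_congr
          intro t _
          simp only [hg, hφ, key s t, havg (t + s)]
          ring
      _ = (∫ t in (0:ℝ)..T, φ (t + s)) - s * ∫ t in (0:ℝ)..T, (g (t + s) - c) := by
          rw [intervalIntegral.integral_sub, intervalIntegral.integral_const_mul]
          · exact (hφc.comp (continuous_id.add continuous_const)).intervalIntegrable _ _
          · exact (continuous_const.mul ((hcont.comp (continuous_id.add
              continuous_const)).sub continuous_const)).intervalIntegrable _ _
      _ = (∫ u in s..T+s, φ u) - s * ∫ u in s..T+s, (g u - c) := by
          rw [intervalIntegral.integral_comp_add_right φ s,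
            intervalIntegral.integral_comp_add_right (fun u => g u - c) s, zero_add]
      _ = A (T + s) - A s := by
          have h1 : (∫ u in s..T+s, (g u - c)) = 0 := by
            rw [add_comm T s]
            rw [hpergc.intervalIntegral_add_eq s 0]
            simpa using hint0
          have h2 : A (T + s) - A s = ∫ u in s..T+s, φ u :=
            intervalIntegral.integral_interval_sub_left
              (hφc.intervalIntegrable _ _) (hφc.intervalIntegrable _ _)
          rw [h1, h2]
          ring
  have hg0 : g 0 = f x := by simp [hg]
  have hgT : g T = g 0 := by simpa using hperg 0
  have hmain : HasDerivAt (fun s : ℝ => (1/T) * (A (T + s) - A s)) (f x - c) 0 := by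
    have h1 : HasDerivAt (fun s : ℝ => A (T + s)) (φ T) 0 := by
      have := (hAderiv (T + 0)).comp 0 ((hasDerivAt_id (0:ℝ)).const_add T)
      simp only [add_zero, mul_one] at this
      exact this
    have h2 : HasDerivAt A (φ 0) 0 := hAderiv 0
    have h3 := (h1.sub h2).const_mul (1/T)
    refine h3.congr_deriv (Eq.symm ?_)
    simp only [hφ, hgT, hg0, mul_comm]
    field_simp
    ring
  have heq : (fun s : ℝ => averagingGenerator ω T f (x.1 + s • ω, x.2))
      = fun s : ℝ => (1/T) * (A (T + s) - A s) := funext hfun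
  rw [heq]
  exact hmain
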